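/- Let X be an infinite-dimensional Banach space containing a normalized weakly null sequence (x_n) that is d-separated for some d > 0. Then K_a(X) ≥ d. -/

import Mathlib

open Set Filter

noncomputable section

/-- `S` is a `(c₁, c₂, d)`-bounded and separated antipodal subset of `X`. -/
def IsBSA (X : Type*) [NormedAddCommGroup X] [NormedSpace ℝ X] (S : Set X)
    (c₁ c₂ d : ℝ) : Prop :=
  (∀ x ∈ S, ‖x‖ ≤ c₁) ∧
  ∀ x ∈ S, ∀ y ∈ S, x ≠ y → ∃ f : X →L[ℝ] ℝ, ‖f‖ ≤ c₂ ∧ d ≤ f y - f x ∧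
    ∀ z ∈ S, f x ≤ f z ∧ f z ≤ f y

/-- The antipodal Kottman constant `K_a(X)`. -/
def Ka (X : Type*) [NormedAddCommGroup X] [NormedSpace ℝ X] : ℝ :=
  sSup {d : ℝ | ∃ S : Set X, S.Infinite ∧ IsBSA X S 1 1 d}

/-- The Kottman (separation) constant `K(X)`. -/
def Kc (X : Type*) [NormedAddCommGroup X] : ℝ :=
  sSup {d : ℝ | ∃ S : Set X, S ⊆ Metric.closedBall 0 1 ∧ S.Infinite ∧
    ∀ x ∈ S, ∀ y ∈ S, x ≠ y → d ≤ ‖x - y‖}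

namespace Stmt10Aux
open Pointwise


/-- A norming functional (norm ≤ 1). -/
noncomputable def normf {X : Type*} [NormedAddCommGroup X] [NormedSpace ℝ X] (v : X) :
    X →L[ℝ] ℝ := (exists_dual_vector'' ℝ v).choose

lemma normf_norm {X : Type*} [NormedAddCommGroup X] [NormedSpace ℝ X] (v : X) :
    ‖normf v‖ ≤ 1 := (exists_dual_vector'' ℝ v).choose_spec.1

lemma normf_apply {X : Type*} [NormedAddCommGroup X] [NormedSpace ℝ X] (v : X) :
    normf v v = ‖v‖ := by
  have := (exists_dual_vector'' ℝ v).choose_spec.2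
  simpa [normf] using this

lemma normf_le {X : Type*} [NormedAddCommGroup X] [NormedSpace ℝ X] (v w : X) :
    normf v w ≤ ‖w‖ := by
  have h1 : ‖normf v w‖ ≤ ‖normf v‖ * ‖w‖ := (normf v).le_opNorm w
  have h2 : ‖normf v‖ * ‖w‖ ≤ 1 * ‖w‖ :=
    mul_le_mul_of_nonneg_right (normf_norm v) (norm_nonneg w)
  calc normf v w ≤ ‖normf v w‖ := le_abs_self _
  _ ≤ ‖normf v‖ * ‖w‖ := h1
  _ ≤ 1 * ‖w‖ := h2
  _ = ‖w‖ := one_mul _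

lemma normf_abs_le {X : Type*} [NormedAddCommGroup X] [NormedSpace ℝ X] (v w : X) :
    |normf v w| ≤ ‖w‖ := by
  rcases abs_cases (normf v w) with ⟨h, _⟩ | ⟨h, _⟩
  · rw [h]; exact normf_le v w
  · rw [h]; simpa using normf_le v (-w)

/-- Dependent-choice history gadget. -/
noncomputable def histSeq {α : Type*} {Q : List α → α → Prop} (tot : ∀ l, ∃ a, Q l a) :
    ℕ → List α
  | 0 => []
  | (m+1) => histSeq tot m ++ [(tot (histSeq tot m)).choose]

noncomputable def chosenSeq {α : Type*} {Q : List α → α → Prop} (tot : ∀ l, ∃ a, Q l a)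
    (m : ℕ) : α := (tot (histSeq tot m)).choose

lemma histSeq_succ {α : Type*} {Q : List α → α → Prop} (tot : ∀ l, ∃ a, Q l a) (m : ℕ) :
    histSeq tot (m+1) = histSeq tot m ++ [chosenSeq tot m] := rfl

lemma chosenSeq_spec {α : Type*} {Q : List α → α → Prop} (tot : ∀ l, ∃ a, Q l a) (m : ℕ) :
    Q (histSeq tot m) (chosenSeq tot m) := (tot (histSeq tot m)).choose_spec

lemma histSeq_eq {α : Type*} {Q : List α → α → Prop} (tot : ∀ l, ∃ a, Q l a) (m : ℕ) :
    histSeq tot m = (List.range m).map (chosenSeq tot) := by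
  induction m with
  | zero => rfl
  | succ m ih => rw [histSeq_succ, ih, List.range_succ, List.map_append]; rfl

lemma histSeq_length {α : Type*} {Q : List α → α → Prop} (tot : ∀ l, ∃ a, Q l a) (m : ℕ) :
    (histSeq tot m).length = m := by
  rw [histSeq_eq]; simp

lemma mem_histSeq_iff {α : Type*} {Q : List α → α → Prop} (tot : ∀ l, ∃ a, Q l a) (m : ℕ)
    (a : α) : a ∈ histSeq tot m ↔ ∃ k < m, chosenSeq tot k = a := by
  rw [histSeq_eq]; simp

lemma histSeq_getD {Q : List ℕ → ℕ → Prop} (tot : ∀ l, ∃ a, Q l a) (m k : ℕ)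
    (hk : k < m) : (histSeq tot m).getD k 0 = chosenSeq tot k := by
  rw [histSeq_eq]
  rw [List.getD_eq_getElem?_getD]
  rw [List.getElem?_eq_getElem (by simpa using hk)]
  simp

/-- Ultrafilter pigeonhole. -/
lemma ultra_pigeon (U : Ultrafilter ℕ) (r : ℕ) (g : ℕ → ℕ) (s : Set ℕ) (hs : s ∈ U)
    (hg : ∀ n ∈ s, g n < r) : ∃ k, k < r ∧ {n | g n = k} ∈ U := by
  induction r generalizing s with
  | zero =>
    obtain ⟨n, hn⟩ := U.nonempty_of_mem hs
    exact absurd (hg n hn) (Nat.not_lt_zero _)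
  | succ r ih =>
    by_cases h : {n | g n = r} ∈ U
    · exact ⟨r, Nat.lt_succ_self r, h⟩
    · have h2 : s ∩ {n | g n = r}ᶜ ∈ U :=
        Filter.inter_mem hs (Ultrafilter.compl_mem_iff_notMem.2 h)
      obtain ⟨k, hk, hk2⟩ := ih (s ∩ {n | g n = r}ᶜ) h2 (fun n hn => by
        have := hg n hn.1
        have h3 : g n ≠ r := hn.2
        omega)
      exact ⟨k, Nat.lt_succ_of_lt hk, hk2⟩

/-- Infinite Ramsey theorem for pairs with finitely many colours. -/
lemma ramsey_pairs (r : ℕ) (c : ℕ → ℕ → ℕ) (hc : ∀ i j, c i j < r) :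
    ∃ φ : ℕ → ℕ, StrictMono φ ∧ ∃ k, k < r ∧ ∀ i j, i < j → c (φ i) (φ j) = k := by
  obtain ⟨U, hU⟩ := Filter.exists_ultrafilter_le (Filter.cofinite : Filter ℕ)
  have hcof : ∀ s : Set ℕ, sᶜ.Finite → s ∈ U := fun s hsf => hU hsf
  -- colour of each point towards the ultrafilter
  have hfib : ∀ i : ℕ, ∃ k, k < r ∧ {n | c i n = k} ∈ U := fun i =>
    ultra_pigeon U r (c i) univ univ_mem (fun n _ => hc i n)
  set kc : ℕ → ℕ := fun i => (hfib i).choose with hkc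
  have hkclt : ∀ i, kc i < r := fun i => (hfib i).choose_spec.1
  have hkcU : ∀ i, {n | c i n = kc i} ∈ U := fun i => (hfib i).choose_spec.2
  obtain ⟨kstar, hkstar, hA⟩ := ultra_pigeon U r kc univ univ_mem (fun n _ => hkclt n)
  set A : Set ℕ := {n | kc n = kstar} with hAdef
  -- the selection predicate
  set Q : List ℕ → ℕ → Prop := fun l n =>
    n ∈ A ∧ ∀ m ∈ l, m < n ∧ c m n = kc m with hQ
  have tot : ∀ l, ∃ n, Q l n := by
    intro l
    have hSU : A ∩ (⋂ m ∈ l.toFinset, ({x | m < x} ∩ {x | c m x = kc m})) ∈ U := by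
      refine Filter.inter_mem hA (Filter.biInter_finset_mem l.toFinset |>.2 ?_)
      intro m _
      refine Filter.inter_mem (hcof _ ?_) (hkcU m)
      have : {x | m < x}ᶜ = Iic m := by ext n; simp [not_lt]
      rw [this]; exact Set.finite_Iic m
    obtain ⟨n, hn⟩ := U.nonempty_of_mem hSU
    refine ⟨n, hn.1, fun m hm => ?_⟩
    have := hn.2
    rw [Set.mem_iInter₂] at this
    have h2 := this m (List.mem_toFinset.2 hm)
    exact ⟨h2.1, h2.2⟩
  refine ⟨chosenSeq tot, ?_, kstar, hkstar, ?_⟩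
  · apply strictMono_nat_of_lt_succ
    intro m
    have hspec := chosenSeq_spec tot (m+1)
    have hmem : chosenSeq tot m ∈ histSeq tot (m+1) :=
      (mem_histSeq_iff tot (m+1) _).2 ⟨m, Nat.lt_succ_self m, rfl⟩
    exact (hspec.2 _ hmem).1
  · intro i j hij
    have hspecj := chosenSeq_spec tot j
    have hmemi : chosenSeq tot i ∈ histSeq tot j :=
      (mem_histSeq_iff tot j _).2 ⟨i, hij, rfl⟩
    have h1 : c (chosenSeq tot i) (chosenSeq tot j) = kc (chosenSeq tot i) :=
      (hspecj.2 _ hmemi).2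
    have h2 : kc (chosenSeq tot i) = kstar := (chosenSeq_spec tot i).1
    rw [h1, h2]



variable {X : Type*} [NormedAddCommGroup X] [NormedSpace ℝ X]

def gmesh (D : ℝ) (j : ℕ) : ℝ := D / (32 * (j+1))

def gN (D : ℝ) (j : ℕ) : ℕ := ⌈2 / gmesh D j⌉₊ + 1

noncomputable def gridFinset (D : ℝ) (j : ℕ) : Finset (ℕ → ℤ) :=
  @Finset.image _ _ (Classical.decEq _) (fun c k => if h : k < j then c ⟨k, h⟩ else 0)
    (Fintype.piFinset fun _ : Fin j => Finset.Icc (-(gN D j : ℤ)) (gN D j))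

lemma mem_gridFinset {D : ℝ} {j : ℕ} {c : ℕ → ℤ} :
    c ∈ gridFinset D j ↔ ∃ cf ∈ Fintype.piFinset
      (fun _ : Fin j => Finset.Icc (-(gN D j : ℤ)) (gN D j)),
      (fun k => if h : k < j then cf ⟨k, h⟩ else 0) = c := by
  classical
  unfold gridFinset
  rw [Finset.mem_image]

noncomputable def gridvec (w : ℕ → X) (D : ℝ) (j : ℕ) (c : ℕ → ℤ) : X :=
  ∑ k ∈ Finset.range j, (((c k : ℝ)) * gmesh D j) • w k

def tau (D : ℝ) (m : ℕ) : ℝ := D/64 * (1/2)^m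

lemma gmesh_pos {D : ℝ} (hD : 0 < D) (j : ℕ) : 0 < gmesh D j := by
  apply div_pos hD; positivity

lemma tau_pos {D : ℝ} (hD : 0 < D) (m : ℕ) : 0 < tau D m := by
  unfold tau; positivity

lemma tau_sum_le {D : ℝ} (hD : 0 < D) (T : Finset ℕ) : ∑ k ∈ T, tau D k ≤ D/32 := by
  obtain ⟨n, hn⟩ := T.exists_nat_subset_range
  have h1 : ∑ k ∈ T, tau D k ≤ ∑ k ∈ Finset.range n, tau D k := by
    apply Finset.sum_le_sum_of_subset_of_nonneg hn
    intro k _ _; exact (tau_pos hD k).le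
  have h2 : ∑ k ∈ Finset.range n, tau D k = D/64 * ∑ k ∈ Finset.range n, (1/(2:ℝ))^k := by
    rw [Finset.mul_sum]; rfl
  have h3 : (∑ k ∈ Finset.range n, (1/(2:ℝ))^k) ≤ 2 := sum_geometric_two_le n
  calc ∑ k ∈ T, tau D k ≤ D/64 * ∑ k ∈ Finset.range n, (1/(2:ℝ))^k := by rw [← h2]; exact h1
  _ ≤ D/64 * 2 := by nlinarith
  _ = D/32 := by ring

lemma gridvec_congr {w w' : ℕ → X} {D : ℝ} {j : ℕ} (c : ℕ → ℤ)
    (h : ∀ k < j, w k = w' k) : gridvec w D j c = gridvec w' D j c := by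
  unfold gridvec
  apply Finset.sum_congr rfl
  intro k hk
  rw [h k (Finset.mem_range.1 hk)]

lemma grid_approx {D : ℝ} (hD : 0 < D) (w : ℕ → X) (hw : ∀ k, ‖w k‖ ≤ 1) (j : ℕ)
    (ν : ℕ → ℝ) (hν : ∀ k, |ν k| ≤ 2) :
    ∃ c ∈ gridFinset D j, ‖(∑ k ∈ Finset.range j, ν k • w k) - gridvec w D j c‖ ≤ D/32 := by
  classical
  set γ := gmesh D j with hγ
  have hγpos : 0 < γ := gmesh_pos hD j
  have hgN : 2/γ + 1 ≤ (gN D j : ℝ) := by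
    rw [gN]
    push_cast
    have := Nat.le_ceil (2/gmesh D j)
    rw [← hγ] at this
    linarith
  set cf : Fin j → ℤ := fun k => ⌊ν (k : ℕ) / γ⌋ with hcf
  have hmemf : cf ∈ Fintype.piFinset (fun _ : Fin j => Finset.Icc (-(gN D j : ℤ)) (gN D j)) := by
    rw [Fintype.mem_piFinset]
    intro k
    rw [Finset.mem_Icc]
    have hub : ν (k:ℕ)/γ ≤ 2/γ := by
      apply div_le_div_of_nonneg_right (abs_le.1 (hν _)).2 hγpos.le
    have hlb : -(2/γ) ≤ ν (k:ℕ)/γ := by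
      rw [← neg_div]
      apply div_le_div_of_nonneg_right (abs_le.1 (hν _)).1 hγpos.le
    constructor
    · apply Int.le_floor.2
      push_cast
      linarith
    · have h4 := Int.floor_le (ν (k:ℕ)/γ)
      have h3 : ((⌊ν (k:ℕ)/γ⌋ : ℤ) : ℝ) ≤ ((gN D j : ℤ) : ℝ) := by push_cast; linarith
      exact_mod_cast h3
  set c : ℕ → ℤ := fun k => if h : k < j then cf ⟨k, h⟩ else 0 with hcdef
  have hmem : c ∈ gridFinset D j :=
    mem_gridFinset.2 ⟨cf, hmemf, rfl⟩
  refine ⟨c, hmem, ?_⟩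
  rw [gridvec, ← Finset.sum_sub_distrib]
  have hterm : ∀ k ∈ Finset.range j, ‖ν k • w k - (((c k : ℝ)) * γ) • w k‖ ≤ γ := by
    intro k hk
    have hkj : k < j := Finset.mem_range.1 hk
    have hck : c k = ⌊ν k / γ⌋ := by rw [hcdef]; simp [hkj, hcf]
    rw [← sub_smul, norm_smul, hck]
    have hfl : ((⌊ν k / γ⌋ : ℝ)) ≤ ν k/γ := Int.floor_le _
    have hfu : ν k/γ - 1 < ((⌊ν k / γ⌋ : ℝ)) := Int.sub_one_lt_floor _
    have hp1 : ((⌊ν k / γ⌋ : ℝ)) * γ ≤ ν k := (le_div_iff₀ hγpos).1 hfl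
    have hp2 : ν k < ((⌊ν k / γ⌋ : ℝ)) * γ + γ := by
      have h5 : ν k/γ < ((⌊ν k / γ⌋ : ℝ)) + 1 := by linarith
      have := (div_lt_iff₀ hγpos).1 h5
      nlinarith
    have h1 : |ν k - (⌊ν k / γ⌋ : ℝ) * γ| ≤ γ := by
      rw [abs_le]; constructor <;> nlinarith
    calc |ν k - (⌊ν k / γ⌋ : ℝ) * γ| * ‖w k‖ ≤ γ * 1 := by
          apply mul_le_mul h1 (hw _) (norm_nonneg _) hγpos.le
    _ = γ := mul_one γ
  calc ‖∑ k ∈ Finset.range j, (ν k • w k - (((c k : ℝ)) * γ) • w k)‖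
      ≤ ∑ _k ∈ Finset.range j, γ := norm_sum_le_of_le _ hterm
  _ = j * γ := by rw [Finset.sum_const]; simp [mul_comm]
  _ ≤ D/32 := by
      rw [hγ, gmesh, ← mul_div_assoc]
      rw [div_le_div_iff₀ (by positivity) (by norm_num)]
      have : (0:ℝ) ≤ (j:ℝ) := Nat.cast_nonneg j
      nlinarith

lemma inv_of_props (z : ℕ → X) (D : ℝ) (hD : 0 < D)
    (hznorm : ∀ k, ‖z k‖ = 1)
    (hP1 : ∀ m, ∀ c ∈ gridFinset D m, 3*D/8 ≤ ‖z m - gridvec z D m c‖)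
    (hP2 : ∀ j m, j < m → ∀ c ∈ gridFinset D j,
        |(normf (z j - gridvec z D j c)) (z m)| ≤ tau D m) :
    ∀ (j : ℕ) (T : Finset ℕ) (ν : ℕ → ℝ), j ∉ T → (∀ k, |ν k| ≤ 2) →
      D/4 ≤ ‖z j - ∑ k ∈ T, ν k • z k‖ := by
  classical
  intro j T ν hjT hν
  set T₁ := T.filter (fun k => k < j) with hT₁
  set T₂ := T.filter (fun k => ¬ k < j) with hT₂
  have hsplit : ∑ k ∈ T, ν k • z k = ∑ k ∈ T₁, ν k • z k + ∑ k ∈ T₂, ν k • z k :=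
    (Finset.sum_filter_add_sum_filter_not T _ _).symm
  set ν' : ℕ → ℝ := fun k => if k ∈ T₁ then ν k else 0 with hν'def
  have hν' : ∀ k, |ν' k| ≤ 2 := by
    intro k
    by_cases h : k ∈ T₁
    · simpa [hν'def, h] using hν k
    · simp [hν'def, h]
  have hS1 : ∑ k ∈ Finset.range j, ν' k • z k = ∑ k ∈ T₁, ν k • z k := by
    have hsub : T₁ ⊆ Finset.range j := by
      intro k hk
      exact Finset.mem_range.2 (Finset.mem_filter.1 hk).2
    rw [← Finset.sum_subset hsub (fun k _ hk => by simp [hν'def, hk])]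
    apply Finset.sum_congr rfl
    intro k hk
    simp [hν'def, hk]
  obtain ⟨c, hcmem, hcerr⟩ := grid_approx hD z (fun k => (hznorm k).le) j ν' hν'
  set v₀ := gridvec z D j c with hv₀
  set f := normf (z j - v₀) with hf
  have key : f (z j - ∑ k ∈ T, ν k • z k) ≤ ‖z j - ∑ k ∈ T, ν k • z k‖ := normf_le _ _
  have halg : z j - ∑ k ∈ T, ν k • z k
      = (z j - v₀) - ((∑ k ∈ Finset.range j, ν' k • z k) - v₀) - ∑ k ∈ T₂, ν k • z k := by
    rw [hS1, hsplit]; abel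
  have e1 : f (z j - v₀) = ‖z j - v₀‖ := normf_apply _
  have e2 : |f ((∑ k ∈ Finset.range j, ν' k • z k) - v₀)| ≤ D/32 :=
    le_trans (normf_abs_le _ _) hcerr
  have e3 : |f (∑ k ∈ T₂, ν k • z k)| ≤ D/16 := by
    rw [map_sum]
    calc |∑ k ∈ T₂, f (ν k • z k)| ≤ ∑ k ∈ T₂, |f (ν k • z k)| :=
          Finset.abs_sum_le_sum_abs _ _
    _ ≤ ∑ k ∈ T₂, 2 * tau D k := by
        apply Finset.sum_le_sum
        intro k hk
        have hk1 : k ∈ T := (Finset.mem_filter.1 hk).1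
        have hk2 : ¬ k < j := (Finset.mem_filter.1 hk).2
        have hkj : j < k := by
          have : k ≠ j := fun h => hjT (h ▸ hk1)
          omega
        have hf2 := hP2 j k hkj c hcmem
        rw [map_smul, smul_eq_mul, abs_mul]
        have : |f (z k)| ≤ tau D k := hf2
        apply mul_le_mul (hν k) this (abs_nonneg _) (by norm_num)
    _ = 2 * ∑ k ∈ T₂, tau D k := by rw [Finset.mul_sum]
    _ ≤ 2 * (D/32) := by
        have := tau_sum_le hD T₂
        linarith
    _ = D/16 := by ring
  have hP1' : 3*D/8 ≤ ‖z j - v₀‖ := hP1 j c hcmem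
  have hlow2 : D/4 ≤ f (z j - ∑ k ∈ T, ν k • z k) := by
    rw [halg, map_sub, map_sub, e1]
    have l2 := (abs_le.1 e2).2
    have l3 := (abs_le.1 e3).2
    linarith
  linarith

lemma case2_aux (z : ℕ → X) (D : ℝ) (hD : 0 < D)
    (hINV : ∀ (j : ℕ) (T : Finset ℕ) (ν : ℕ → ℝ), j ∉ T → (∀ k, |ν k| ≤ 2) →
      D/4 ≤ ‖z j - ∑ k ∈ T, ν k • z k‖)
    (i j : ℕ) (hij : i ≠ j) (T : Finset ℕ) (hiT : i ∉ T) (hjT : j ∉ T)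
    (a b : ℕ → ℝ) (ha : ∀ k, 0 ≤ a k) (hb : ∀ k, 0 ≤ b k)
    (hAB : ∑ k ∈ T, a k ≤ ∑ k ∈ T, b k) (h6 : 6 < ∑ k ∈ T, a k + ∑ k ∈ T, b k) :
    D ≤ ‖(z j - z i) + (∑ k ∈ T, a k • (z k - z i) + ∑ k ∈ T, b k • (z j - z k))‖ := by
  classical
  set A := ∑ k ∈ T, a k with hA
  set B := ∑ k ∈ T, b k with hB
  have hA0 : 0 ≤ A := Finset.sum_nonneg (fun k _ => ha k)
  have hB0 : 0 ≤ B := Finset.sum_nonneg (fun k _ => hb k)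
  have hB3 : 3 < B := by linarith
  have hBne : (1+B) ≠ 0 := by linarith
  set ν : ℕ → ℝ := fun k => if k = i then (1+A)/(1+B) else
      (if k ∈ T then (b k - a k)/(1+B) else 0) with hν
  have hν2 : ∀ k, |ν k| ≤ 2 := by
    intro k
    by_cases h1 : k = i
    · have hvk : ν k = (1+A)/(1+B) := by rw [hν]; simp [h1]
      rw [hvk, abs_of_nonneg (div_nonneg (by linarith) (by linarith))]
      rw [div_le_iff₀ (by linarith)]
      linarith
    · by_cases h2 : k ∈ T
      · have hvk : ν k = (b k - a k)/(1+B) := by rw [hν]; simp [h1, h2]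
        rw [hvk, abs_div, abs_of_nonneg (by linarith : (0:ℝ) ≤ 1 + B)]
        rw [div_le_iff₀ (by linarith)]
        have hak : a k ≤ A := Finset.single_le_sum (fun k _ => ha k) h2
        have hbk : b k ≤ B := Finset.single_le_sum (fun k _ => hb k) h2
        have habs : |b k - a k| ≤ B := by
          rw [abs_le]
          constructor
          · have := ha k; have := hb k; linarith
          · have := ha k; linarith
        linarith
      · have hvk : ν k = 0 := by rw [hν]; simp [h1, h2]
        rw [hvk]
        norm_num
  set T' := insert i T with hT'
  have hjT' : j ∉ T' := by
    rw [hT', Finset.mem_insert]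
    push_neg
    exact ⟨Ne.symm hij, hjT⟩
  have hkey := hINV j T' ν hjT' hν2
  have hsum : ∑ k ∈ T', ν k • z k
      = ((1+A)/(1+B)) • z i + ∑ k ∈ T, ((b k - a k)/(1+B)) • z k := by
    rw [hT', Finset.sum_insert hiT]
    congr 1
    · rw [hν]; simp
    · apply Finset.sum_congr rfl
      intro k hk
      have hki : k ≠ i := fun h => hiT (h ▸ hk)
      rw [hν]
      simp [hki, hk]
  have halg : (z j - z i) + (∑ k ∈ T, a k • (z k - z i) + ∑ k ∈ T, b k • (z j - z k))
      = (1+B) • (z j - ∑ k ∈ T', ν k • z k) := by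
    rw [hsum]
    have e1 : ∑ k ∈ T, a k • (z k - z i) = ∑ k ∈ T, a k • z k - A • z i := by
      simp only [smul_sub]
      rw [Finset.sum_sub_distrib, ← Finset.sum_smul]
    have e2 : ∑ k ∈ T, b k • (z j - z k) = B • z j - ∑ k ∈ T, b k • z k := by
      simp only [smul_sub]
      rw [Finset.sum_sub_distrib, ← Finset.sum_smul]
    have e3 : ∑ k ∈ T, ((b k - a k)/(1+B)) • z k
        = (1/(1+B)) • (∑ k ∈ T, b k • z k - ∑ k ∈ T, a k • z k) := by
      rw [smul_sub, Finset.smul_sum, Finset.smul_sum, ← Finset.sum_sub_distrib]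
      apply Finset.sum_congr rfl
      intro k _
      rw [smul_smul, smul_smul, ← sub_smul]
      congr 1
      field_simp
    rw [e1, e2, e3]
    set Sa := ∑ k ∈ T, a k • z k with hSa
    set Sb := ∑ k ∈ T, b k • z k with hSb
    rw [smul_sub, smul_add, smul_smul, smul_smul]
    have s1 : (1+B) * ((1+A)/(1+B)) = 1+A := by field_simp
    have s2 : (1+B) * (1/(1+B)) = 1 := by field_simp
    rw [s1, s2]
    module
  rw [halg, norm_smul]
  have habs : ‖(1+B)‖ = 1 + B := by
    rw [Real.norm_eq_abs, abs_of_pos (by linarith)]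
  rw [habs]
  calc D = 4 * (D/4) := by ring
  _ ≤ (1+B) * (D/4) := by nlinarith
  _ ≤ (1+B) * ‖z j - ∑ k ∈ T', ν k • z k‖ := by nlinarith [hkey, norm_nonneg (z j - ∑ k ∈ T', ν k • z k)]

lemma core_estimate (z : ℕ → X) (D κ : ℝ) (hD : 0 < D) (hκ : 0 ≤ κ)
    (hlow : ∀ k l, k ≠ l → D ≤ ‖z k - z l‖)
    (hhigh : ∀ k l, k ≠ l → ‖z k - z l‖ ≤ D + κ)
    (hINV : ∀ (j : ℕ) (T : Finset ℕ) (ν : ℕ → ℝ), j ∉ T → (∀ k, |ν k| ≤ 2) →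
      D/4 ≤ ‖z j - ∑ k ∈ T, ν k • z k‖)
    (i j : ℕ) (hij : i ≠ j) (T : Finset ℕ) (hiT : i ∉ T) (hjT : j ∉ T)
    (a b : ℕ → ℝ) (ha : ∀ k, 0 ≤ a k) (hb : ∀ k, 0 ≤ b k) :
    D - 6*κ ≤ ‖(z j - z i) + (∑ k ∈ T, a k • (z k - z i) + ∑ k ∈ T, b k • (z j - z k))‖ := by
  classical
  by_cases hbig : 6 < (∑ k ∈ T, a k) + (∑ k ∈ T, b k)
  · rcases le_total (∑ k ∈ T, a k) (∑ k ∈ T, b k) with hAB | hAB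
    · calc D - 6*κ ≤ D := by nlinarith
      _ ≤ _ := case2_aux z D hD hINV i j hij T hiT hjT a b ha hb hAB hbig
    · have h1 : ∑ k ∈ T, b k • (z k - z j) = - ∑ k ∈ T, b k • (z j - z k) := by
        rw [← Finset.sum_neg_distrib]
        apply Finset.sum_congr rfl
        intro k _
        rw [← smul_neg, neg_sub]
      have h2 : ∑ k ∈ T, a k • (z i - z k) = - ∑ k ∈ T, a k • (z k - z i) := by
        rw [← Finset.sum_neg_distrib]
        apply Finset.sum_congr rfl
        intro k _
        rw [← smul_neg, neg_sub]
      have hswap : (z j - z i) + (∑ k ∈ T, a k • (z k - z i) + ∑ k ∈ T, b k • (z j - z k))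
          = -((z i - z j) + (∑ k ∈ T, b k • (z k - z j) + ∑ k ∈ T, a k • (z i - z k))) := by
        rw [h1, h2]
        abel
      rw [hswap, norm_neg]
      calc D - 6*κ ≤ D := by nlinarith
      _ ≤ _ := case2_aux z D hD hINV j i (Ne.symm hij) T hjT hiT b a hb ha hAB
          (by linarith)
  · push_neg at hbig
    set g := normf (z j - z i) with hg
    have hzij : D ≤ ‖z j - z i‖ := hlow j i (Ne.symm hij)
    have hgv : g (z j - z i) = ‖z j - z i‖ := normf_apply _
    have t1 : ∀ k ∈ T, -κ ≤ g (z k - z i) := by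
      intro k hk
      have hkj : k ≠ j := fun h => hjT (h ▸ hk)
      have hdecomp : z k - z i = (z j - z i) - (z j - z k) := by abel
      rw [hdecomp, map_sub, hgv]
      have := normf_le (z j - z i) (z j - z k)
      have h3 := hhigh j k (Ne.symm hkj)
      linarith
    have t2 : ∀ k ∈ T, -κ ≤ g (z j - z k) := by
      intro k hk
      have hki : k ≠ i := fun h => hiT (h ▸ hk)
      have hdecomp : z j - z k = (z j - z i) - (z k - z i) := by abel
      rw [hdecomp, map_sub, hgv]
      have := normf_le (z j - z i) (z k - z i)
      have h3 := hhigh k i hki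
      linarith
    have hVal : D - 6*κ ≤ g ((z j - z i) + (∑ k ∈ T, a k • (z k - z i) + ∑ k ∈ T, b k • (z j - z k))) := by
      rw [map_add, map_add, map_sum, map_sum, hgv]
      have s1 : ∑ k ∈ T, g (a k • (z k - z i)) ≥ ∑ k ∈ T, a k * (-κ) := by
        apply Finset.sum_le_sum
        intro k hk
        rw [map_smul, smul_eq_mul]
        exact mul_le_mul_of_nonneg_left (t1 k hk) (ha k)
      have s2 : ∑ k ∈ T, g (b k • (z j - z k)) ≥ ∑ k ∈ T, b k * (-κ) := by
        apply Finset.sum_le_sum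
        intro k hk
        rw [map_smul, smul_eq_mul]
        exact mul_le_mul_of_nonneg_left (t2 k hk) (hb k)
      have s3 : ∑ k ∈ T, a k * (-κ) = -((∑ k ∈ T, a k) * κ) := by
        rw [← Finset.sum_mul]; ring
      have s4 : ∑ k ∈ T, b k * (-κ) = -((∑ k ∈ T, b k) * κ) := by
        rw [← Finset.sum_mul]; ring
      rw [s3] at s1
      rw [s4] at s2
      have hA0 : 0 ≤ ∑ k ∈ T, a k := Finset.sum_nonneg (fun k _ => ha k)
      have hB0 : 0 ≤ ∑ k ∈ T, b k := Finset.sum_nonneg (fun k _ => hb k)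
      nlinarith [mul_nonneg hA0 hκ, mul_nonneg hB0 hκ]
    calc D - 6*κ ≤ _ := hVal
    _ ≤ _ := normf_le _ _

lemma cone_step {G val r : ℝ} (hG : r ≤ G) (hval : val < 0)
    (hall : ∀ t, 0 ≤ t → r ≤ G + t * val) : False := by
  have hnz : -val > 0 := by linarith
  have ht0 : 0 ≤ (G - r + 1)/(-val) := div_nonneg (by linarith) hnz.le
  have h1 := hall _ ht0
  have h2 : (G - r + 1)/(-val) * val = -(G - r + 1) := by
    rw [div_mul_eq_mul_div, div_eq_iff (by linarith : -val ≠ 0)]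
    ring
  linarith

lemma pair_functional (z : ℕ → X) (r : ℝ) (hr : 0 < r) (i j : ℕ) (hij : i ≠ j)
    (hbound : ∀ (T : Finset ℕ), i ∉ T → j ∉ T → ∀ a b : ℕ → ℝ,
      (∀ k, 0 ≤ a k) → (∀ k, 0 ≤ b k) →
      r ≤ ‖(z j - z i) + (∑ k ∈ T, a k • (z k - z i) + ∑ k ∈ T, b k • (z j - z k))‖) :
    ∃ F : X →L[ℝ] ℝ, ‖F‖ ≤ 1 ∧ r ≤ F (z j) - F (z i) ∧
      ∀ k, F (z i) ≤ F (z k) ∧ F (z k) ≤ F (z j) := by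
  classical
  set K : Set X := {w | ∃ (T : Finset ℕ) (a b : ℕ → ℝ), i ∉ T ∧ j ∉ T ∧
      (∀ k, 0 ≤ a k) ∧ (∀ k, 0 ≤ b k) ∧ (∀ k, k ∉ T → a k = 0) ∧ (∀ k, k ∉ T → b k = 0) ∧
      w = (z j - z i) + (∑ k ∈ T, a k • (z k - z i) + ∑ k ∈ T, b k • (z j - z k))} with hK
  have hv₀K : (z j - z i) ∈ K := by
    refine ⟨∅, 0, 0, Finset.notMem_empty i, Finset.notMem_empty j,
      fun k => le_refl 0, fun k => le_refl 0, fun k _ => rfl, fun k _ => rfl, ?_⟩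
    simp
  have hgenK : ∀ (k : ℕ) (t : ℝ), 0 ≤ t → k ≠ i → k ≠ j →
      ((z j - z i) + t • (z k - z i)) ∈ K ∧ ((z j - z i) + t • (z j - z k)) ∈ K := by
    intro k t ht hki hkj
    constructor
    · refine ⟨{k}, (fun m => if m = k then t else 0), 0, ?_, ?_,
        fun m => ?_, fun m => le_refl 0, fun m hm => ?_, fun m _ => rfl, ?_⟩
      · simp [Ne.symm hki]
      · simp [Ne.symm hkj]
      · by_cases h : m = k <;> simp [h, ht]
      · simp only [Finset.mem_singleton] at hm; simp [hm]
      · simp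
    · refine ⟨{k}, 0, (fun m => if m = k then t else 0), ?_, ?_,
        fun m => le_refl 0, fun m => ?_, fun m _ => rfl, fun m hm => ?_, ?_⟩
      · simp [Ne.symm hki]
      · simp [Ne.symm hkj]
      · by_cases h : m = k <;> simp [h, ht]
      · simp only [Finset.mem_singleton] at hm; simp [hm]
      · simp
  have sumext : ∀ (T₀ T : Finset ℕ) (f : ℕ → ℝ) (u : ℕ → X), T₀ ⊆ T →
      (∀ k, k ∉ T₀ → f k = 0) →
      ∑ k ∈ T, f k • u k = ∑ k ∈ T₀, f k • u k := by
    intro T₀ T f u hsub h0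
    exact (Finset.sum_subset hsub (fun k _ hk => by rw [h0 k hk, zero_smul])).symm
  have hKnorm : ∀ w ∈ K, r ≤ ‖w‖ := by
    rintro w ⟨T, a, b, hiT, hjT, ha, hb, _, _, rfl⟩
    exact hbound T hiT hjT a b ha hb
  have hconv : Convex ℝ K := by
    rintro w₁ ⟨T₁, a₁, b₁, hiT₁, hjT₁, ha₁, hb₁, ha₁0, hb₁0, rfl⟩
      w₂ ⟨T₂, a₂, b₂, hiT₂, hjT₂, ha₂, hb₂, ha₂0, hb₂0, rfl⟩ p q hp hq hpq
    have key : ∀ (u : ℕ → X) (f₁ f₂ : ℕ → ℝ), (∀ k, k ∉ T₁ → f₁ k = 0) →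
        (∀ k, k ∉ T₂ → f₂ k = 0) →
        ∑ k ∈ T₁ ∪ T₂, (p * f₁ k + q * f₂ k) • u k
          = p • (∑ k ∈ T₁, f₁ k • u k) + q • (∑ k ∈ T₂, f₂ k • u k) := by
      intro u f₁ f₂ h₁0 h₂0
      calc ∑ k ∈ T₁ ∪ T₂, (p * f₁ k + q * f₂ k) • u k
          = ∑ k ∈ T₁ ∪ T₂, ((p * f₁ k) • u k + (q * f₂ k) • u k) := by
            apply Finset.sum_congr rfl; intro k _; rw [add_smul]
      _ = ∑ k ∈ T₁ ∪ T₂, (p * f₁ k) • u k + ∑ k ∈ T₁ ∪ T₂, (q * f₂ k) • u k :=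
            Finset.sum_add_distrib
      _ = ∑ k ∈ T₁, (p * f₁ k) • u k + ∑ k ∈ T₂, (q * f₂ k) • u k := by
            rw [sumext T₁ _ (fun k => p * f₁ k) u Finset.subset_union_left
                (fun k hk => by show p * f₁ k = 0; rw [h₁0 k hk, mul_zero]),
              sumext T₂ _ (fun k => q * f₂ k) u Finset.subset_union_right
                (fun k hk => by show q * f₂ k = 0; rw [h₂0 k hk, mul_zero])]
      _ = p • (∑ k ∈ T₁, f₁ k • u k) + q • (∑ k ∈ T₂, f₂ k • u k) := by
            rw [Finset.smul_sum, Finset.smul_sum]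
            congr 1 <;> (apply Finset.sum_congr rfl; intro k _; rw [smul_smul])
    refine ⟨T₁ ∪ T₂, (fun k => p * a₁ k + q * a₂ k), (fun k => p * b₁ k + q * b₂ k),
      ?_, ?_, ?_, ?_, ?_, ?_, ?_⟩
    · simp [hiT₁, hiT₂]
    · simp [hjT₁, hjT₂]
    · intro k; exact add_nonneg (mul_nonneg hp (ha₁ k)) (mul_nonneg hq (ha₂ k))
    · intro k; exact add_nonneg (mul_nonneg hp (hb₁ k)) (mul_nonneg hq (hb₂ k))
    · intro k hk
      rw [Finset.mem_union] at hk; push_neg at hk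
      show p * a₁ k + q * a₂ k = 0
      rw [ha₁0 k hk.1, ha₂0 k hk.2]; ring
    · intro k hk
      rw [Finset.mem_union] at hk; push_neg at hk
      show p * b₁ k + q * b₂ k = 0
      rw [hb₁0 k hk.1, hb₂0 k hk.2]; ring
    · rw [key (fun k => z k - z i) a₁ a₂ ha₁0 ha₂0, key (fun k => z j - z k) b₁ b₂ hb₁0 hb₂0]
      have hv : p • (z j - z i) + q • (z j - z i) = z j - z i := by
        rw [← add_smul, hpq, one_smul]
      calc p • ((z j - z i) + (∑ k ∈ T₁, a₁ k • (z k - z i) + ∑ k ∈ T₁, b₁ k • (z j - z k)))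
            + q • ((z j - z i) + (∑ k ∈ T₂, a₂ k • (z k - z i) + ∑ k ∈ T₂, b₂ k • (z j - z k)))
          = (p • (z j - z i) + q • (z j - z i)) +
            ((p • (∑ k ∈ T₁, a₁ k • (z k - z i)) + q • (∑ k ∈ T₂, a₂ k • (z k - z i))) +
             (p • (∑ k ∈ T₁, b₁ k • (z j - z k)) + q • (∑ k ∈ T₂, b₂ k • (z j - z k)))) := by
            module
      _ = _ := by rw [hv]
  -- separation
  set s : Set X := K + Metric.ball (0:X) r with hs
  have hsopen : IsOpen s := IsOpen.add_left Metric.isOpen_ball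
  have hsconv : Convex ℝ s := hconv.add (convex_ball 0 r)
  have h0s : (0:X) ∉ s := by
    rintro ⟨w, hw, u, hu, h0⟩
    have h1 : w = -u := by
      have := h0
      rw [add_eq_zero_iff_eq_neg] at this
      exact this
    have h2 : ‖w‖ < r := by
      rw [h1, norm_neg]
      simpa using hu
    exact absurd (hKnorm w hw) (not_le.2 h2)
  obtain ⟨f, hf⟩ := geometric_hahn_banach_open_point hsconv hsopen h0s
  have hf0 : ∀ w ∈ K, ∀ u : X, ‖u‖ < r → f (w + u) < 0 := by
    intro w hw u hu
    have : (w + u) ∈ s := ⟨w, hw, u, by simpa using hu, rfl⟩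
    simpa using hf _ this
  have hfv₀ : f (z j - z i) < 0 := by
    have := hf0 _ hv₀K 0 (by simpa using hr)
    simpa using this
  have hfne : f ≠ 0 := by
    intro h
    rw [h] at hfv₀
    simp at hfv₀
  have hfnorm : 0 < ‖f‖ := norm_pos_iff.2 hfne
  have hkey : ∀ w ∈ K, r * ‖f‖ ≤ -(f w) := by
    intro w hw
    set cst := -(f w) with hcst
    have hcstpos : 0 < cst := by
      have := hf0 w hw 0 (by simpa using hr)
      simp only [add_zero] at this
      simp [hcst]; linarith
    have claim : ∀ v : X, ‖f v‖ ≤ (cst/r) * ‖v‖ := by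
      intro v
      by_cases hv : v = 0
      · simp [hv]
      · have hvn : 0 < ‖v‖ := norm_pos_iff.2 hv
        rw [Real.norm_eq_abs]
        by_contra hcon
        push_neg at hcon
        have hcon' : cst * ‖v‖ < |f v| * r := by
          rw [div_mul_eq_mul_div, div_lt_iff₀ hr] at hcon
          exact hcon
        have hfvpos : 0 < |f v| := by nlinarith [norm_nonneg v, hcstpos.le]
        set t := (cst * ‖v‖ / (|f v| * r) + 1)/2 with ht
        have ht0 : 0 < t := by
          have : 0 ≤ cst * ‖v‖ / (|f v| * r) := by positivity
          rw [ht]; linarith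
        have ht1 : t < 1 := by
          have : cst * ‖v‖ / (|f v| * r) < 1 := by
            rw [div_lt_one (by positivity)]
            exact hcon'
          rw [ht]; linarith
        have htc : cst * ‖v‖ < t * (|f v| * r) := by
          have h5 : cst * ‖v‖ / (|f v| * r) < t := by
            rw [ht]
            have : cst * ‖v‖ / (|f v| * r) < 1 := by
              rw [div_lt_one (by positivity)]; exact hcon'
            linarith
          calc cst * ‖v‖ = (cst * ‖v‖ / (|f v| * r)) * (|f v| * r) := by
                field_simp
          _ < t * (|f v| * r) := by
                apply mul_lt_mul_of_pos_right h5 (by positivity)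
        set u := ((t*r)/‖v‖) • v with hu
        have hun : ‖u‖ < r := by
          rw [hu, norm_smul, Real.norm_eq_abs, abs_of_pos (by positivity)]
          rw [div_mul_eq_mul_div, mul_comm]
          rw [div_lt_iff₀ hvn]
          nlinarith [mul_pos (mul_pos hr hvn) (sub_pos.2 ht1)]
        have h6 := hf0 w hw u hun
        have h7 := hf0 w hw (-u) (by rwa [norm_neg])
        rw [map_add] at h6
        rw [map_add, map_neg] at h7
        have h8 : |f u| < cst := by
          rw [abs_lt, hcst]
          constructor <;> linarith
        have h9 : |f u| = (t*r/‖v‖) * |f v| := by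
          rw [hu, map_smul, smul_eq_mul, abs_mul, abs_of_pos (by positivity)]
        rw [h9] at h8
        have h10 : t * r / ‖v‖ * |f v| * ‖v‖ = t * (|f v| * r) := by
          field_simp
        nlinarith [mul_lt_mul_of_pos_right h8 hvn]
    have h11 : ‖f‖ ≤ cst/r :=
      ContinuousLinearMap.opNorm_le_bound f (by positivity) claim
    calc r * ‖f‖ ≤ r * (cst/r) := by nlinarith
    _ = cst := by field_simp
  set F : X →L[ℝ] ℝ := (-(‖f‖)⁻¹ : ℝ) • f with hF
  have hFval : ∀ v, F v = -(f v) / ‖f‖ := by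
    intro v
    rw [hF]
    simp [ContinuousLinearMap.smul_apply]
    ring
  have hFnorm : ‖F‖ ≤ 1 := by
    rw [hF]
    have h1 : ‖(-(‖f‖)⁻¹ : ℝ) • f‖ ≤ ‖(-(‖f‖)⁻¹ : ℝ)‖ * ‖f‖ :=
      ContinuousLinearMap.opNorm_smul_le _ _
    have h2 : ‖(-(‖f‖)⁻¹ : ℝ)‖ = ‖f‖⁻¹ := by
      rw [Real.norm_eq_abs, abs_neg, abs_of_pos (inv_pos.2 hfnorm)]
    rw [h2] at h1
    rw [inv_mul_cancel₀ (ne_of_gt hfnorm)] at h1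
    exact h1
  have hFK : ∀ w ∈ K, r ≤ F w := by
    intro w hw
    rw [hFval]
    rw [le_div_iff₀ hfnorm]
    have := hkey w hw
    nlinarith
  have hgap : r ≤ F (z j) - F (z i) := by
    have := hFK _ hv₀K
    rwa [map_sub] at this
  refine ⟨F, hFnorm, hgap, ?_⟩
  have hconepos : ∀ k, 0 ≤ F (z k - z i) ∧ 0 ≤ F (z j - z k) := by
    intro k
    by_cases hki : k = i
    · subst hki
      constructor
      · simp
      · have := hgap; rw [← map_sub] at this; linarith
    · by_cases hkj : k = j
      · subst hkj
        constructor
        · have := hgap; rw [← map_sub] at this; linarith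
        · simp
      · constructor
        · by_contra hneg
          push_neg at hneg
          refine cone_step (G := F (z j - z i)) (r := r) ?_ hneg (fun t ht => ?_)
          · rw [← map_sub] at hgap; exact hgap
          · have hw := (hgenK k t ht hki hkj).1
            have h1 := hFK _ hw
            rwa [map_add, map_smul, smul_eq_mul] at h1
        · by_contra hneg
          push_neg at hneg
          refine cone_step (G := F (z j - z i)) (r := r) ?_ hneg (fun t ht => ?_)
          · rw [← map_sub] at hgap; exact hgap
          · have hw := (hgenK k t ht hki hkj).2
            have h1 := hFK _ hw
            rwa [map_add, map_smul, smul_eq_mul] at h1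
  intro k
  obtain ⟨h1, h2⟩ := hconepos k
  rw [map_sub] at h1 h2
  constructor <;> linarith

lemma exists_stable_subseq (x : ℕ → X) (d κ : ℝ) (hd : 0 < d) (hκ : 0 < κ) (hd2 : d ≤ 2)
    (hsep : ∀ n m : ℕ, n ≠ m → d ≤ ‖x n - x m‖)
    (hnorm : ∀ n, ‖x n‖ = 1) :
    ∃ (φ : ℕ → ℕ) (D : ℝ), StrictMono φ ∧ d ≤ D ∧ D ≤ 2 ∧
      (∀ i j, i ≠ j → D ≤ ‖x (φ i) - x (φ j)‖ ∧ ‖x (φ i) - x (φ j)‖ ≤ D + κ) := by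
  classical
  set M := ⌈(2 - d)/κ⌉₊ with hM
  set col : ℕ → ℕ → ℕ := fun i j => min (⌊(‖x i - x j‖ - d)/κ⌋₊) M with hcol
  have hcollt : ∀ i j, col i j < M + 1 := fun i j => Nat.lt_succ_of_le (min_le_right _ _)
  obtain ⟨φ, hφ, k, _hk, hhom⟩ := ramsey_pairs (M+1) col hcollt
  set D := d + (k : ℝ) * κ with hDdef
  have hDd : d ≤ D := by
    rw [hDdef]
    have : (0:ℝ) ≤ (k:ℝ) * κ := mul_nonneg (Nat.cast_nonneg k) hκ.le
    linarith
  have main : ∀ i j, i < j → D ≤ ‖x (φ i) - x (φ j)‖ ∧ ‖x (φ i) - x (φ j)‖ ≤ D + κ := by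
    intro i j hij
    have hne : φ i ≠ φ j := fun h => (Nat.ne_of_lt hij) (hφ.injective h)
    have htd : d ≤ ‖x (φ i) - x (φ j)‖ := hsep _ _ hne
    have ht2 : ‖x (φ i) - x (φ j)‖ ≤ 2 := by
      have h2 := norm_sub_le (x (φ i)) (x (φ j))
      rw [hnorm (φ i), hnorm (φ j)] at h2
      linarith
    have hc := hhom i j hij
    have hnonneg : (0:ℝ) ≤ (‖x (φ i) - x (φ j)‖ - d)/κ := div_nonneg (by linarith) hκ.le
    constructor
    · have h2 : k ≤ ⌊(‖x (φ i) - x (φ j)‖ - d)/κ⌋₊ := by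
        rw [← hc]
        simp only [hcol]
        exact min_le_left _ _
      have h1 : (k : ℝ) ≤ (‖x (φ i) - x (φ j)‖ - d)/κ :=
        le_trans (Nat.cast_le.2 h2) (Nat.floor_le hnonneg)
      have h3 : (k : ℝ) * κ ≤ ‖x (φ i) - x (φ j)‖ - d := by
        rw [← le_div_iff₀ hκ]
        exact h1
      rw [hDdef]
      linarith
    · rcases Nat.lt_or_ge (⌊(‖x (φ i) - x (φ j)‖ - d)/κ⌋₊) M with hfM | hfM
      · have hkf : (k : ℕ) = ⌊(‖x (φ i) - x (φ j)‖ - d)/κ⌋₊ := by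
          rw [← hc]
          simp only [hcol]
          exact min_eq_left hfM.le
        have h3 : (‖x (φ i) - x (φ j)‖ - d)/κ < (k : ℝ) + 1 := by
          rw [hkf]
          push_cast
          exact Nat.lt_floor_add_one _
        have h4 := (div_lt_iff₀ hκ).1 h3
        rw [hDdef]
        nlinarith
      · have hkf : (k : ℕ) = M := by
          rw [← hc]
          simp only [hcol]
          exact min_eq_right hfM
        have hMk : 2 - d ≤ (M:ℝ) * κ := by
          have h5 := Nat.le_ceil ((2 - d)/κ)
          rw [← hM] at h5
          have h6 := (div_le_iff₀ hκ).1 h5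
          linarith
        rw [hDdef, hkf]
        linarith
  have hD2 : D ≤ 2 := by
    have h7 := (main 0 1 (by norm_num)).1
    have h8 := norm_sub_le (x (φ 0)) (x (φ 1))
    rw [hnorm (φ 0), hnorm (φ 1)] at h8
    linarith
  refine ⟨φ, D, hφ, hDd, hD2, ?_⟩
  intro i j hij
  rcases lt_or_gt_of_ne hij with h | h
  · exact main i j h
  · have h9 := main j i h
    rwa [norm_sub_rev] at h9

lemma exists_infinite_bsa (y : ℕ → X) (D κ : ℝ) (hD : 0 < D) (hκ : 0 < κ)
    (hnorm : ∀ n, ‖y n‖ = 1)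
    (hweak : ∀ f : X →L[ℝ] ℝ, Tendsto (fun n => f (y n)) atTop (nhds 0))
    (hlow : ∀ n m, n ≠ m → D ≤ ‖y n - y m‖)
    (hhigh : ∀ n m, n ≠ m → ‖y n - y m‖ ≤ D + κ)
    (hr : 0 < D - 6*κ) :
    ∃ S : Set X, S.Infinite ∧ IsBSA X S 1 1 (D - 6*κ) := by
  classical
  set Q : List ℕ → ℕ → Prop := fun l n =>
    (∀ i ∈ l, i < n) ∧
    (∀ c ∈ gridFinset D l.length,
        3*D/8 ≤ ‖y n - gridvec (fun k => y (l.getD k 0)) D l.length c‖) ∧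
    (∀ j, j < l.length → ∀ c ∈ gridFinset D j,
        |(normf (y (l.getD j 0) - gridvec (fun k => y (l.getD k 0)) D j c)) (y n)|
          ≤ tau D l.length) with hQ
  have tot : ∀ l, ∃ n, Q l n := by
    intro l
    have E1 : ∀ᶠ n in atTop, ∀ i ∈ l, i < n := by
      have h1 : ∀ᶠ n in atTop, ∀ i ∈ l.toFinset, i < n :=
        (Filter.eventually_all_finset _).2 (fun i _ => Filter.eventually_gt_atTop i)
      exact h1.mono (fun n h i hi => h i (List.mem_toFinset.2 hi))
    have E2 : ∀ᶠ n in atTop, ∀ c ∈ gridFinset D l.length,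
        3*D/8 ≤ ‖y n - gridvec (fun k => y (l.getD k 0)) D l.length c‖ := by
      apply (Filter.eventually_all_finset _).2
      intro c _
      set v := gridvec (fun k => y (l.getD k 0)) D l.length c with hv
      have hsub : {n : ℕ | ‖y n - v‖ < 3*D/8}.Subsingleton := by
        intro n hn m hm
        by_contra hnm
        have h1 := hlow n m hnm
        have h2 : ‖y n - y m‖ ≤ ‖y n - v‖ + ‖y m - v‖ := by
          have h3 : y n - y m = (y n - v) - (y m - v) := by abel
          rw [h3]
          exact norm_sub_le _ _
        simp only [mem_setOf_eq] at hn hm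
        linarith
      have hfin : {n : ℕ | ‖y n - v‖ < 3*D/8}.Finite := hsub.finite
      rw [← Nat.cofinite_eq_atTop]
      apply Filter.mem_of_superset hfin.compl_mem_cofinite
      intro n hn
      simp only [mem_compl_iff, mem_setOf_eq, not_lt] at hn
      exact hn
    have E3 : ∀ᶠ n in atTop, ∀ j, j < l.length → ∀ c ∈ gridFinset D j,
        |(normf (y (l.getD j 0) - gridvec (fun k => y (l.getD k 0)) D j c)) (y n)|
          ≤ tau D l.length := by
      have hτ : 0 < tau D l.length := tau_pos hD _
      have key : ∀ j, j < l.length → ∀ c, c ∈ gridFinset D j → ∀ᶠ n in atTop,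
          |(normf (y (l.getD j 0) - gridvec (fun k => y (l.getD k 0)) D j c)) (y n)|
            ≤ tau D l.length := by
        intro j _ c _
        have h3 := hweak (normf (y (l.getD j 0) - gridvec (fun k => y (l.getD k 0)) D j c))
        have h4 : ∀ᶠ v : ℝ in nhds 0, |v| < tau D l.length := by
          have h5 : Metric.ball (0:ℝ) (tau D l.length) ∈ nhds (0:ℝ) :=
            Metric.ball_mem_nhds _ hτ
          filter_upwards [h5] with v hv
          simpa [Real.dist_eq] using hv
        exact (h3.eventually h4).mono (fun n h => h.le)
      have h6 : ∀ᶠ n in atTop, ∀ j ∈ Finset.range l.length, ∀ c ∈ gridFinset D j,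
          |(normf (y (l.getD j 0) - gridvec (fun k => y (l.getD k 0)) D j c)) (y n)|
            ≤ tau D l.length :=
        (Filter.eventually_all_finset _).2 (fun j hj => (Filter.eventually_all_finset _).2
          (fun c hc => key j (Finset.mem_range.1 hj) c hc))
      exact h6.mono (fun n h j hj c hc => h j (Finset.mem_range.2 hj) c hc)
    obtain ⟨n, hn⟩ := (E1.and (E2.and E3)).exists
    exact ⟨n, hn.1, hn.2.1, hn.2.2⟩
  set σ := chosenSeq tot with hσ
  set z : ℕ → X := fun m => y (σ m) with hzdef
  have hgetD : ∀ m k, k < m → (histSeq tot m).getD k 0 = σ k :=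
    fun m k hk => histSeq_getD tot m k hk
  have hlen : ∀ m, (histSeq tot m).length = m := histSeq_length tot
  have hσmono : StrictMono σ := by
    apply strictMono_nat_of_lt_succ
    intro m
    have hspec := (chosenSeq_spec tot (m+1)).1
    exact hspec _ ((mem_histSeq_iff tot (m+1) _).2 ⟨m, Nat.lt_succ_self m, rfl⟩)
  have hzlow : ∀ k l, k ≠ l → D ≤ ‖z k - z l‖ :=
    fun k l h => hlow _ _ (fun he => h (hσmono.injective he))
  have hzhigh : ∀ k l, k ≠ l → ‖z k - z l‖ ≤ D + κ :=
    fun k l h => hhigh _ _ (fun he => h (hσmono.injective he))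
  have hznorm : ∀ k, ‖z k‖ = 1 := fun k => hnorm _
  have hP1 : ∀ m, ∀ c ∈ gridFinset D m, 3*D/8 ≤ ‖z m - gridvec z D m c‖ := by
    intro m c hc
    have hspec := (chosenSeq_spec tot m).2.1
    rw [hlen m] at hspec
    have h2 := hspec c hc
    have e1 : gridvec (fun k => y ((histSeq tot m).getD k 0)) D m c = gridvec z D m c := by
      apply gridvec_congr
      intro k hk
      show y ((histSeq tot m).getD k 0) = z k
      rw [hgetD m k hk]
    rw [e1] at h2
    exact h2
  have hP2 : ∀ j m, j < m → ∀ c ∈ gridFinset D j,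
      |(normf (z j - gridvec z D j c)) (z m)| ≤ tau D m := by
    intro j m hjm c hc
    have hspec := (chosenSeq_spec tot m).2.2
    rw [hlen m] at hspec
    have h2 := hspec j hjm c hc
    have e1 : gridvec (fun k => y ((histSeq tot m).getD k 0)) D j c = gridvec z D j c := by
      apply gridvec_congr
      intro k hk
      show y ((histSeq tot m).getD k 0) = z k
      rw [hgetD m k (hk.trans hjm)]
    rw [e1, hgetD m j hjm] at h2
    exact h2
  have hINV := inv_of_props z D hD hznorm hP1 hP2
  have hbound : ∀ (i j : ℕ), i ≠ j → ∀ (T : Finset ℕ), i ∉ T → j ∉ T → ∀ a b : ℕ → ℝ,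
      (∀ k, 0 ≤ a k) → (∀ k, 0 ≤ b k) →
      D - 6*κ ≤ ‖(z j - z i) + (∑ k ∈ T, a k • (z k - z i) + ∑ k ∈ T, b k • (z j - z k))‖ :=
    fun i j hij T hiT hjT a b ha hb =>
      core_estimate z D κ hD hκ.le hzlow hzhigh hINV i j hij T hiT hjT a b ha hb
  have hzinj : Function.Injective z := by
    intro k l h
    by_contra hne
    have h1 := hzlow k l hne
    rw [h, sub_self, norm_zero] at h1
    linarith
  refine ⟨Set.range z, Set.infinite_range_of_injective hzinj, ?_, ?_⟩
  · rintro x' ⟨k, rfl⟩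
    exact (hznorm k).le
  · rintro x' ⟨i, rfl⟩ y' ⟨j, rfl⟩ hne
    have hij : i ≠ j := fun h => hne (by rw [h])
    obtain ⟨F, hF1, hF2, hF3⟩ :=
      pair_functional z (D - 6*κ) hr i j hij (hbound i j hij)
    refine ⟨F, hF1, hF2, ?_⟩
    rintro z'' ⟨k, rfl⟩
    exact hF3 k

end Stmt10Aux

/-- If an infinite-dimensional Banach space contains a normalized weakly null
d-separated sequence (d > 0), then K_a(X) ≥ d. -/
theorem stmt10 {X : Type*} [NormedAddCommGroup X] [NormedSpace ℝ X]
    [CompleteSpace X] (hinf : ¬FiniteDimensional ℝ X)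
    (x : ℕ → X) (d : ℝ) (hd : 0 < d)
    (hnorm : ∀ n, ‖x n‖ = 1)
    (hweak : ∀ f : X →L[ℝ] ℝ, Tendsto (fun n => f (x n)) atTop (nhds 0))
    (hsep : ∀ n m : ℕ, n ≠ m → d ≤ ‖x n - x m‖) :
    d ≤ Ka X := by
  classical
  have hd2 : d ≤ 2 := by
    have h1 := hsep 0 1 (by norm_num)
    have h2 := norm_sub_le (x 0) (x 1)
    rw [hnorm 0, hnorm 1] at h2
    linarith
  have hbdd : BddAbove {d' : ℝ | ∃ S : Set X, S.Infinite ∧ IsBSA X S 1 1 d'} := by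
    refine ⟨2, ?_⟩
    rintro d' ⟨S, hSinf, hS1, hS2⟩
    obtain ⟨p, hp, q, hq, hpq⟩ := hSinf.nontrivial
    obtain ⟨f, hf1, hf2, _⟩ := hS2 p hp q hq hpq
    have h3 : f q - f p = f (q - p) := (map_sub f q p).symm
    have h4 : f (q - p) ≤ ‖f‖ * ‖q - p‖ := by
      calc f (q - p) ≤ |f (q - p)| := le_abs_self _
      _ = ‖f (q - p)‖ := (Real.norm_eq_abs _).symm
      _ ≤ ‖f‖ * ‖q - p‖ := f.le_opNorm _
    have h5 : ‖q - p‖ ≤ 2 := by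
      have h9 := norm_sub_le q p
      have h6 : ‖q‖ ≤ 1 := hS1 q hq
      have h7 : ‖p‖ ≤ 1 := hS1 p hp
      linarith
    have h8 : ‖f‖ * ‖q - p‖ ≤ 2 := by
      nlinarith [norm_nonneg f, norm_nonneg (q - p)]
    linarith [hf2]
  have key : ∀ ε : ℝ, 0 < ε → ε < d → d - ε/2 ≤ Ka X := by
    intro ε hε hεd
    have hκ : 0 < ε/12 := by linarith
    obtain ⟨φ, D, hφ, hDd, hD2, hstab⟩ :=
      Stmt10Aux.exists_stable_subseq x d (ε/12) hd hκ hd2 hsep hnorm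
    have hD : 0 < D := lt_of_lt_of_le hd hDd
    have hyweak : ∀ f : X →L[ℝ] ℝ, Tendsto (fun n => f (x (φ n))) atTop (nhds 0) :=
      fun f => (hweak f).comp hφ.tendsto_atTop
    have hr : 0 < D - 6*(ε/12) := by linarith
    obtain ⟨S, hSinf, hSbsa⟩ := Stmt10Aux.exists_infinite_bsa (fun n => x (φ n)) D (ε/12)
      hD hκ (fun n => hnorm _) hyweak
      (fun n m h => (hstab n m h).1) (fun n m h => (hstab n m h).2) hr
    have hmem : (D - 6*(ε/12)) ∈ {d' : ℝ | ∃ S : Set X, S.Infinite ∧ IsBSA X S 1 1 d'} :=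
      ⟨S, hSinf, hSbsa⟩
    have hle : D - 6*(ε/12) ≤ Ka X := le_csSup hbdd hmem
    calc d - ε/2 ≤ D - 6*(ε/12) := by linarith
    _ ≤ Ka X := hle
  by_contra hcon
  push_neg at hcon
  set ε := min (d - Ka X) (d/2) with hεd
  have hε1 : 0 < ε := lt_min (by linarith) (by linarith)
  have hε2 : ε < d := lt_of_le_of_lt (min_le_right _ _) (by linarith)
  have h10 := key ε hε1 hε2
  have h11 : ε ≤ d - Ka X := min_le_left _ _
  linarith
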